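/- arXiv:1211.4433 — 2 statements merged into one kernel-verified Lean document; each statement's English description precedes it below -/
import Mathlib

section
/- Let n ≥ 6 be even, a = n/2, and let k'_1 < k'_2 < ⋯ < k'_a and k'_{a+1} < ⋯ < k'_{n-2} be two increasing sequences partitioning {2,3,...,n-1}. Then the sum ((1/2)n² − (3/2)n + 1)·(C(a,2) + C(n-2-a,2)) + Σ_{1≤i<j≤a}(k'_j − k'_i) + Σ_{a+1≤i<j≤n-2}(k'_j − k'_i) is at most (1/8)n⁴ − (25/24)n³ + (7/2)n² − (29/6)n + 2. -/
open Finset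

def Ufun (m s : ℕ) : ℚ :=
  (m:ℚ)*s - s - (s:ℚ)^2/2 + (if s % 2 = 1 then (1:ℚ)/2 else 0)




lemma sum_Ioc_quad (A B C : ℚ) (b a : ℕ) (h : a ≤ b) :
    ∑ i ∈ Finset.Ioc a b, (A * (i:ℚ)^2 + B * i + C)
      = A * ((b:ℚ)*(b+1)*(2*b+1) - (a:ℚ)*(a+1)*(2*a+1))/6
        + B * ((b:ℚ)*(b+1) - (a:ℚ)*(a+1))/2 + C * ((b:ℚ) - a) := by
  induction b, h using Nat.le_induction with
  | base => simp [Finset.Ioc_self]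
  | succ b hb ih =>
      rw [Finset.sum_Ioc_succ_top (by omega)]
      rw [ih]
      push_cast
      ring

lemma sum_parity (j : ℕ) :
    ∑ i ∈ Finset.Ioc 0 (2*j+1), (if i % 2 = 1 then (1:ℚ)/2 else 0) = ((j:ℚ)+1)/2 := by
  induction j with
  | zero => norm_num
  | succ j ih =>
      have h1 : 2*(j+1)+1 = (2*j+1) + 1 + 1 := by ring
      rw [h1, Finset.sum_Ioc_succ_top (by omega), Finset.sum_Ioc_succ_top (by omega), ih]
      have h2 : (2*j+1+1) % 2 = 0 := by omega
      have h3 : (2*j+1+1+1) % 2 = 1 := by omega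
      rw [h2, h3]
      push_cast
      norm_num
      ring




lemma pair_sum (f : ℕ → ℚ) (l u : ℕ)  :
    ∑ p ∈ (Finset.Icc l u ×ˢ Finset.Icc l u).filter (fun p => p.1 < p.2),
      (f p.2 - f p.1)
    = ∑ i ∈ Finset.Icc l u, (2 * (i:ℚ) - l - u) * f i := by
  rw [Finset.sum_filter, Finset.sum_product]
  have step : ∀ i ∈ Finset.Icc l u,
      ∑ j ∈ Finset.Icc l u, (if i < j then f j - f i else 0)
      = (∑ j ∈ Finset.Icc l u, (if i < j then f j else 0)) - ((u:ℚ) - i) * f i := by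
    intro i hi
    simp only [Finset.mem_Icc] at hi
    have h1 : ∑ j ∈ Finset.Icc l u, (if i < j then f j - f i else 0)
        = ∑ j ∈ Finset.Icc l u, ((if i < j then f j else 0) - (if i < j then f i else 0)) := by
      apply Finset.sum_congr rfl; intro j _; split <;> simp
    rw [h1, Finset.sum_sub_distrib]
    congr 1
    rw [← Finset.sum_filter, Finset.sum_const]
    have h2 : (Finset.Icc l u).filter (fun j => i < j) = Finset.Ioc i u := by
      ext x; simp [Finset.mem_Icc, Finset.mem_Ioc]; omega
    rw [h2, Nat.card_Ioc, nsmul_eq_mul, Nat.cast_sub hi.2]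
  rw [Finset.sum_congr rfl step, Finset.sum_sub_distrib]
  rw [Finset.sum_comm]
  have step2 : ∀ j ∈ Finset.Icc l u,
      ∑ i ∈ Finset.Icc l u, (if i < j then f j else 0) = ((j:ℚ) - l) * f j := by
    intro j hj
    simp only [Finset.mem_Icc] at hj
    rw [← Finset.sum_filter, Finset.sum_const]
    have h2 : (Finset.Icc l u).filter (fun i => i < j) = Finset.Ico l j := by
      ext x; simp [Finset.mem_Icc, Finset.mem_Ico]; omega
    rw [h2, Nat.card_Ico, nsmul_eq_mul, Nat.cast_sub hj.1]
  rw [Finset.sum_congr rfl step2, ← Finset.sum_sub_distrib]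
  apply Finset.sum_congr rfl; intro i _; ring




lemma upclosed (l u : ℕ) (hl : 1 ≤ l) (T : Finset ℕ) (hT : T ⊆ Finset.Icc l u)
    (hup : ∀ i j, i ∈ T → i ≤ j → j ≤ u → j ∈ T) :
    T = Finset.Ioc (u - T.card) u := by
  rcases T.eq_empty_or_nonempty with h | h
  · simp [h]
  · set i₀ := T.min' h with hi₀
    have hmem := T.min'_mem h
    have h1 : l ≤ i₀ ∧ i₀ ≤ u := by
      have := hT hmem
      rw [Finset.mem_Icc] at this
      exact this
    have hTe : T = Finset.Ioc (i₀ - 1) u := by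
      ext x
      simp only [Finset.mem_Ioc]
      constructor
      · intro hx
        have h2 := T.min'_le x hx
        have h3 := hT hx
        simp only [Finset.mem_Icc] at h3
        omega
      · intro hx
        exact hup i₀ x hmem (by omega) hx.2
    rw [hTe]
    congr 1
    rw [Nat.card_Ioc]
    omega

lemma card_superlevel (N t : ℕ) (k : ℕ → ℕ)
    (hbij : Set.BijOn k (Set.Icc 1 N) (Set.Icc 2 (N+1))) (ht : 2 ≤ t) (htN : t ≤ N) :
    ((Finset.Icc 1 N).filter (fun i => t < k i)).card = N + 1 - t := by
  have key : ((Finset.Icc 1 N).filter (fun i => t < k i)).card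
      = (Finset.Icc (t+1) (N+1)).card := by
    apply Finset.card_bij (fun i _ => k i)
    · intro i hi
      simp only [Finset.mem_filter, Finset.mem_Icc] at hi
      have := hbij.mapsTo (show i ∈ Set.Icc 1 N from Set.mem_Icc.2 ⟨hi.1.1, hi.1.2⟩)
      simp only [Set.mem_Icc] at this
      simp only [Finset.mem_Icc]
      omega
    · intro i hi j hj hij
      simp only [Finset.mem_filter, Finset.mem_Icc] at hi hj
      exact hbij.injOn (Set.mem_Icc.2 ⟨hi.1.1, hi.1.2⟩) (Set.mem_Icc.2 ⟨hj.1.1, hj.1.2⟩) hij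
    · intro v hv
      simp only [Finset.mem_Icc] at hv
      obtain ⟨i, hi, rfl⟩ := hbij.surjOn (show v ∈ Set.Icc 2 (N+1) from Set.mem_Icc.2 ⟨by omega, hv.2⟩)
      simp only [Set.mem_Icc] at hi
      exact ⟨i, by simp only [Finset.mem_filter, Finset.mem_Icc]; omega, rfl⟩
  rw [key, Nat.card_Icc]
  omega

lemma thresh (N v : ℕ) (h2 : 2 ≤ v) (hv : v ≤ N + 1) :
    (v:ℚ) = 2 + ∑ t ∈ Finset.Icc 2 N, (if t < v then (1:ℚ) else 0) := by
  rw [Finset.sum_boole]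
  have h : (Finset.Icc 2 N).filter (fun t => t < v) = Finset.Ico 2 v := by
    ext x; simp only [Finset.mem_filter, Finset.mem_Icc, Finset.mem_Ico]; omega
  rw [h, Nat.card_Ico]
  rw [Nat.cast_sub h2]
  push_cast
  ring




lemma core_ineq (m s₁ s₂ s : ℕ) (hs : s₁ + s₂ = s) :
    (s₁:ℚ) * ((m:ℚ) - s₁) + (s₂:ℚ) * ((m:ℚ) - 2 - s₂)
      ≤ (m:ℚ)*s - s - (s:ℚ)^2/2 + (if s % 2 = 1 then (1:ℚ)/2 else 0) := by
  have hsq : (s₁:ℚ) + s₂ = s := by exact_mod_cast hs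
  by_cases hp : s % 2 = 1
  · rw [if_pos hp]
    nlinarith [sq_nonneg ((s₁:ℚ) - s₂ - 1)]
  · rw [if_neg hp]
    have hz : ((s₁:ℤ) - s₂ - 1) ≠ 0 := by omega
    have h1 : (1:ℤ) ≤ ((s₁:ℤ) - s₂ - 1)^2 := by
      have h2 := Int.one_le_abs hz
      nlinarith [sq_abs ((s₁:ℤ) - s₂ - 1)]
    have h1q : (1:ℚ) ≤ ((s₁:ℚ) - s₂ - 1)^2 := by exact_mod_cast h1
    nlinarith [h1q]

lemma reindex (N : ℕ) (hN : 2 ≤ N) (F : ℕ → ℚ) :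
    ∑ t ∈ Finset.Icc 2 N, F (N + 1 - t) = ∑ s ∈ Finset.Icc 1 (N-1), F s := by
  apply Finset.sum_nbij' (i := fun t => N + 1 - t) (j := fun s => N + 1 - s)
  · intro t ht; rw [Finset.mem_Icc] at *; omega
  · intro s hs; rw [Finset.mem_Icc] at *; omega
  · intro t ht; rw [Finset.mem_Icc] at ht; omega
  · intro s hs; rw [Finset.mem_Icc] at hs; omega
  · intro t ht; rfl

lemma thresh_swap (l u N : ℕ) (k : ℕ → ℕ) (c : ℕ → ℚ)
    (hzero : ∑ i ∈ Finset.Icc l u, c i = 0)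
    (hk : ∀ i ∈ Finset.Icc l u,
      (k i : ℚ) = 2 + ∑ t ∈ Finset.Icc 2 N, (if t < k i then (1:ℚ) else 0)) :
    ∑ i ∈ Finset.Icc l u, c i * k i
      = ∑ t ∈ Finset.Icc 2 N, ∑ i ∈ (Finset.Icc l u).filter (fun i => t < k i), c i := by
  have step1 : ∑ i ∈ Finset.Icc l u, c i * k i
      = ∑ i ∈ Finset.Icc l u,
          (c i * 2 + ∑ t ∈ Finset.Icc 2 N, (if t < k i then c i else 0)) := by
    apply Finset.sum_congr rfl
    intro i hi
    rw [hk i hi, mul_add, Finset.mul_sum]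
    congr 1
    apply Finset.sum_congr rfl
    intro t _
    split <;> simp
  rw [step1, Finset.sum_add_distrib, ← Finset.sum_mul, hzero, zero_mul, zero_add,
    Finset.sum_comm]
  apply Finset.sum_congr rfl
  intro t _
  rw [← Finset.sum_filter]

lemma block_eval (l u t : ℕ) (k : ℕ → ℕ) (hl : 1 ≤ l) (C : ℚ)
    (hmono : ∀ i j, l ≤ i → i < j → j ≤ u → k i < k j) :
    ∑ i ∈ (Finset.Icc l u).filter (fun i => t < k i), (2*(i:ℚ) + C)
      = (((Finset.Icc l u).filter (fun i => t < k i)).card : ℚ)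
          * (2*(u:ℚ) + 1 + C - ((Finset.Icc l u).filter (fun i => t < k i)).card) := by
  set T := (Finset.Icc l u).filter (fun i => t < k i) with hT
  have hsub : T ⊆ Finset.Icc l u := Finset.filter_subset _ _
  have hup : ∀ i j, i ∈ T → i ≤ j → j ≤ u → j ∈ T := by
    intro i j hi hij hju
    rw [hT, Finset.mem_filter, Finset.mem_Icc] at hi ⊢
    rcases eq_or_lt_of_le hij with rfl | hlt
    · exact hi
    · exact ⟨⟨by omega, hju⟩, lt_trans hi.2 (hmono i j hi.1.1 hlt hju)⟩
  have hcard : T.card ≤ u := by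
    have h1 := Finset.card_le_card hsub
    rw [Nat.card_Icc] at h1
    omega
  have hTe := upclosed l u hl T hsub hup
  have hsum : ∑ i ∈ T, (2*(i:ℚ) + C) = ∑ i ∈ Finset.Ioc (u - T.card) u, (2*(i:ℚ) + C) := by
    rw [← hTe]
  rw [hsum]
  have hmatch : ∑ i ∈ Finset.Ioc (u - T.card) u, (2*(i:ℚ) + C)
      = ∑ i ∈ Finset.Ioc (u - T.card) u, (0 * (i:ℚ)^2 + 2 * i + C) := by
    apply Finset.sum_congr rfl; intro i _; ring
  rw [hmatch, sum_Ioc_quad 0 2 C u (u - T.card) (by omega)]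
  rw [Nat.cast_sub hcard]
  ring


lemma sum_Ufun (m : ℕ) (hm : 3 ≤ m) :
    ∑ s ∈ Finset.Icc 1 (m+m-2-1), Ufun m s
      = ((m:ℚ)-1)*((m:ℚ)-1)*(2*(m:ℚ)-3)
        - (2*(m:ℚ)-3)*(2*(m:ℚ)-2)*(4*(m:ℚ)-5)/12 + ((m:ℚ)-1)/2 := by
  have h0 : Finset.Icc 1 (m+m-2-1) = Finset.Ioc 0 (2*(m-2)+1) := by
    ext x; simp only [Finset.mem_Icc, Finset.mem_Ioc]; omega
  rw [h0]
  have hsplit : ∀ s : ℕ, Ufun m s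
      = ((-1/2) * (s:ℚ)^2 + ((m:ℚ)-1)*s + 0) + (if s % 2 = 1 then (1:ℚ)/2 else 0) := by
    intro s; unfold Ufun; ring
  rw [Finset.sum_congr rfl (fun s _ => hsplit s), Finset.sum_add_distrib, sum_parity (m-2),
      sum_Ioc_quad (-1/2) ((m:ℚ)-1) 0 (2*(m-2)+1) 0 (by omega)]
  have h2 : ((m-2:ℕ):ℚ) = (m:ℚ)-2 := by rw [Nat.cast_sub (by omega)]; norm_num
  push_cast [h2]
  ring

/-- Lemma 3 of the paper for `n = 2m`, `a = m`: bound on the crossing count of a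
sorted mesh `M'_{n,a}` whose defining permutation consists of two increasing blocks
partitioning `{2,…,n−1}`. -/
theorem mesh_crossing_bound (n a : ℕ) (hn : 6 ≤ n) (heven : Even n) (ha : a = n / 2)
    (k : ℕ → ℕ)
    (hmono₁ : ∀ i j : ℕ, 1 ≤ i → i < j → j ≤ a → k i < k j)
    (hmono₂ : ∀ i j : ℕ, a + 1 ≤ i → i < j → j ≤ n - 2 → k i < k j)
    (hbij : Set.BijOn k (Set.Icc 1 (n - 2)) (Set.Icc 2 (n - 1))) :
    ((1 / 2 : ℚ) * (n : ℚ) ^ 2 - (3 / 2) * (n : ℚ) + 1) *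
        ((a.choose 2 : ℚ) + ((n - 2 - a).choose 2 : ℚ)) +
      (∑ p ∈ (Finset.Icc 1 a ×ˢ Finset.Icc 1 a).filter (fun p => p.1 < p.2),
        ((k p.2 : ℚ) - (k p.1 : ℚ))) +
      (∑ p ∈ (Finset.Icc (a + 1) (n - 2) ×ˢ Finset.Icc (a + 1) (n - 2)).filter
          (fun p => p.1 < p.2), ((k p.2 : ℚ) - (k p.1 : ℚ))) ≤
    (1 / 8) * (n : ℚ) ^ 4 - (25 / 24) * (n : ℚ) ^ 3 + (7 / 2) * (n : ℚ) ^ 2 -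
      (29 / 6) * (n : ℚ) + 2 := by
  have haa : n = a + a := by obtain ⟨r, hr⟩ := heven; omega
  subst haa
  have hm3 : 3 ≤ a := by omega
  rw [show a + a - 1 = a + a - 2 + 1 from by omega] at hbij
  rw [pair_sum (fun i => (k i : ℚ)) 1 a, pair_sum (fun i => (k i : ℚ)) (a+1) (a+a-2)]
  -- cast facts
  have hcast : ((a+a-2:ℕ):ℚ) = (a:ℚ)+(a:ℚ)-2 := by
    rw [Nat.cast_sub (by omega)]; push_cast; ring
  -- canonical coefficient functions
  set C₁ : ℚ := -1 - (a:ℚ) with hC₁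
  set C₂ : ℚ := -(((a+1:ℕ)):ℚ) - ((a+a-2:ℕ):ℚ) with hC₂
  have conv1 : ∑ i ∈ Finset.Icc 1 a, (2*(i:ℚ) - ((1:ℕ):ℚ) - ((a:ℕ):ℚ)) * (k i : ℚ)
      = ∑ i ∈ Finset.Icc 1 a, (2*(i:ℚ) + C₁) * (k i : ℚ) := by
    apply Finset.sum_congr rfl; intro i _; rw [hC₁]; push_cast; ring
  have conv2 : ∑ i ∈ Finset.Icc (a+1) (a+a-2),
        (2*(i:ℚ) - ((a+1:ℕ):ℚ) - ((a+a-2:ℕ):ℚ)) * (k i : ℚ)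
      = ∑ i ∈ Finset.Icc (a+1) (a+a-2), (2*(i:ℚ) + C₂) * (k i : ℚ) := by
    apply Finset.sum_congr rfl; intro i _; rw [hC₂]; ring
  rw [conv1, conv2]
  -- threshold representation of k
  have hk : ∀ i ∈ Finset.Icc 1 (a+a-2),
      (k i : ℚ) = 2 + ∑ t ∈ Finset.Icc 2 (a+a-2), (if t < k i then (1:ℚ) else 0) := by
    intro i hi
    rw [Finset.mem_Icc] at hi
    have hmem := hbij.mapsTo (Set.mem_Icc.2 ⟨hi.1, hi.2⟩)
    rw [Set.mem_Icc] at hmem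
    exact thresh _ _ hmem.1 hmem.2
  -- zero sums of coefficients
  have hIcc1 : Finset.Icc 1 a = Finset.Ioc 0 a := by
    ext x; simp only [Finset.mem_Icc, Finset.mem_Ioc]; omega
  have hIcc2 : Finset.Icc (a+1) (a+a-2) = Finset.Ioc a (a+a-2) := by
    ext x; simp only [Finset.mem_Icc, Finset.mem_Ioc]; omega
  have zero1 : ∑ i ∈ Finset.Icc 1 a, (2*(i:ℚ) + C₁) = 0 := by
    rw [hIcc1]
    have hmatch : ∑ i ∈ Finset.Ioc 0 a, (2*(i:ℚ) + C₁)
        = ∑ i ∈ Finset.Ioc 0 a, (0*(i:ℚ)^2 + 2*i + C₁) := by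
      apply Finset.sum_congr rfl; intro i _; ring
    rw [hmatch, sum_Ioc_quad 0 2 C₁ a 0 (by omega), hC₁]
    push_cast; ring
  have zero2 : ∑ i ∈ Finset.Icc (a+1) (a+a-2), (2*(i:ℚ) + C₂) = 0 := by
    rw [hIcc2]
    have hmatch : ∑ i ∈ Finset.Ioc a (a+a-2), (2*(i:ℚ) + C₂)
        = ∑ i ∈ Finset.Ioc a (a+a-2), (0*(i:ℚ)^2 + 2*i + C₂) := by
      apply Finset.sum_congr rfl; intro i _; ring
    rw [hmatch, sum_Ioc_quad 0 2 C₂ (a+a-2) a (by omega), hC₂, hcast]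
    push_cast; ring
  -- swap to threshold sums
  rw [thresh_swap 1 a (a+a-2) k (fun i => 2*(i:ℚ) + C₁) zero1
        (fun i hi => hk i (by rw [Finset.mem_Icc] at *; omega)),
      thresh_swap (a+1) (a+a-2) (a+a-2) k (fun i => 2*(i:ℚ) + C₂) zero2
        (fun i hi => hk i (by rw [Finset.mem_Icc] at *; omega))]
  -- cardinality of superlevel sets
  have hcards : ∀ t ∈ Finset.Icc 2 (a+a-2),
      ((Finset.Icc 1 a).filter (fun i => t < k i)).card
        + ((Finset.Icc (a+1) (a+a-2)).filter (fun i => t < k i)).card = a+a-2+1-t := by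
    intro t ht
    rw [Finset.mem_Icc] at ht
    have hsp : (Finset.Icc 1 (a+a-2)).filter (fun i => t < k i)
        = (Finset.Icc 1 a).filter (fun i => t < k i)
          ∪ (Finset.Icc (a+1) (a+a-2)).filter (fun i => t < k i) := by
      ext x
      simp only [Finset.mem_union, Finset.mem_filter, Finset.mem_Icc]
      omega
    have hdisj : Disjoint ((Finset.Icc 1 a).filter (fun i => t < k i))
        ((Finset.Icc (a+1) (a+a-2)).filter (fun i => t < k i)) := by
      rw [Finset.disjoint_left]
      intro x hx hx2
      simp only [Finset.mem_filter, Finset.mem_Icc] at hx hx2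
      omega
    have hcs := card_superlevel (a+a-2) t k hbij ht.1 ht.2
    rw [hsp, Finset.card_union_of_disjoint hdisj] at hcs
    omega
  -- per-threshold bound
  have per_t : ∀ t ∈ Finset.Icc 2 (a+a-2),
      (∑ i ∈ (Finset.Icc 1 a).filter (fun i => t < k i), (2*(i:ℚ) + C₁))
        + (∑ i ∈ (Finset.Icc (a+1) (a+a-2)).filter (fun i => t < k i), (2*(i:ℚ) + C₂))
      ≤ Ufun a (a+a-2+1-t) := by
    intro t ht
    rw [block_eval 1 a t k (by norm_num) C₁ hmono₁,
        block_eval (a+1) (a+a-2) t k (by omega) C₂ hmono₂]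
    have hc := hcards t ht
    set s₁ := ((Finset.Icc 1 a).filter (fun i => t < k i)).card with hs₁
    set s₂ := ((Finset.Icc (a+1) (a+a-2)).filter (fun i => t < k i)).card with hs₂
    have e1 : 2*(a:ℚ) + 1 + C₁ - (s₁:ℚ) = (a:ℚ) - s₁ := by rw [hC₁]; ring
    have e2 : 2*((a+a-2:ℕ):ℚ) + 1 + C₂ - (s₂:ℚ) = (a:ℚ) - 2 - s₂ := by
      rw [hC₂, hcast]; push_cast; ring
    rw [e1, e2]
    have := core_ineq a s₁ s₂ (a+a-2+1-t) hc
    unfold Ufun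
    exact this
  -- sum the bounds
  have step := Finset.sum_le_sum per_t
  have hre := reindex (a+a-2) (by omega) (Ufun a)
  rw [hre] at step
  rw [sum_Ufun a hm3] at step
  have hmerge := Finset.sum_add_distrib (s := Finset.Icc 2 (a+a-2))
    (f := fun t => ∑ i ∈ (Finset.Icc 1 a).filter (fun i => t < k i), (2*(i:ℚ) + C₁))
    (g := fun t => ∑ i ∈ (Finset.Icc (a+1) (a+a-2)).filter (fun i => t < k i), (2*(i:ℚ) + C₂))
  -- final polynomial computation
  have hch1 : ((Nat.choose a 2 : ℕ):ℚ) = (a:ℚ)*((a:ℚ)-1)/2 := Nat.cast_choose_two (K := ℚ) a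
  have hch2 : ((Nat.choose (a+a-2-a) 2 : ℕ):ℚ) = ((a:ℚ)-2)*((a:ℚ)-3)/2 := by
    rw [show a+a-2-a = a-2 from by omega, Nat.cast_choose_two,
        Nat.cast_sub (by omega : 2 ≤ a)]
    push_cast; ring
  rw [hch1, hch2]
  push_cast
  nlinarith [step, hmerge]
end

section
/- For all n ≥ 7, ((n−1)!/5!)²·5196/6·6 + Σ over odd i from 7 to n of ((n−1)!/(i−1)!)²·((i−1)!/24)(3i⁴−25i³+75i²−95i+42) + Σ over even i from 8 to n of ((n−1)!/(i−1)!)²·((i−2)!/24)(3i⁵−28i⁴+103i³−188i²+164i−48) equals ((n−1)!)²·[127/300 + 5/(24(n−4)!) + Σ_{i=3}^{n−5} 1/(3·i!) + Σ over even i from 8 to n of (1/(8(i−3)!) − 1/(4(i−2)!) + 1/(4(i−1)!·(i−1)))]. -/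
theorem closed_aux (n : ℕ) (hn : 7 ≤ n) :
    (5196 : ℚ) / 14400 +
      (∑ i ∈ (Finset.Icc 7 n).filter (fun i => Odd i),
        ((1 : ℚ) / ((i - 1).factorial : ℚ)) ^ 2 *
          (((i - 1).factorial : ℚ) / 24) *
          (3 * (i : ℚ) ^ 4 - 25 * (i : ℚ) ^ 3 + 75 * (i : ℚ) ^ 2 - 95 * (i : ℚ) + 42)) +
      (∑ i ∈ (Finset.Icc 8 n).filter (fun i => Even i),
        ((1 : ℚ) / ((i - 1).factorial : ℚ)) ^ 2 *
          (((i - 2).factorial : ℚ) / 24) *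
          (3 * (i : ℚ) ^ 5 - 28 * (i : ℚ) ^ 4 + 103 * (i : ℚ) ^ 3 - 188 * (i : ℚ) ^ 2 +
            164 * (i : ℚ) - 48)) =
      127 / 300 + 5 / (24 * ((n - 4).factorial : ℚ)) +
        (∑ i ∈ Finset.Icc 3 (n - 5), 1 / (3 * (i.factorial : ℚ))) +
        (∑ i ∈ (Finset.Icc 8 n).filter (fun i => Even i),
          (1 / (8 * ((i - 3).factorial : ℚ)) - 1 / (4 * ((i - 2).factorial : ℚ)) +
            1 / (4 * ((i - 1).factorial : ℚ) * ((i : ℚ) - 1)))) := by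
  induction n, hn using Nat.le_induction with
  | base =>
    rw [show Finset.Icc 7 7 = {7} from rfl, show Finset.Icc 8 7 = ∅ from by decide,
      show Finset.Icc 3 2 = ∅ from by decide,
      show Finset.filter (fun i => Odd i) ({7} : Finset ℕ) = {7} from by decide,
      show Finset.filter (fun i => Even i) (∅ : Finset ℕ) = ∅ from rfl]
    norm_num [Nat.factorial]
  | succ n hn ih =>
    obtain ⟨m, rfl⟩ : ∃ m, n = m + 7 := ⟨n - 7, by omega⟩
    have h7 : Finset.Icc 7 (m + 7 + 1) = insert (m + 7 + 1) (Finset.Icc 7 (m + 7)) :=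
      (Finset.insert_Icc_right_eq_Icc_add_one (by omega)).symm
    have h8 : Finset.Icc 8 (m + 7 + 1) = insert (m + 7 + 1) (Finset.Icc 8 (m + 7)) :=
      (Finset.insert_Icc_right_eq_Icc_add_one (by omega)).symm
    have h3 : Finset.Icc 3 (m + 7 + 1 - 5) = insert (m + 3) (Finset.Icc 3 (m + 7 - 5)) := by
      rw [show m + 7 + 1 - 5 = (m + 2) + 1 from by omega, show m + 7 - 5 = m + 2 from by omega,
        ← Finset.insert_Icc_right_eq_Icc_add_one (by omega)]
      rfl
    have e1 : m + 7 + 1 - 1 = m + 7 := by omega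
    have e2 : m + 7 + 1 - 2 = m + 6 := by omega
    have e3 : m + 7 + 1 - 3 = m + 5 := by omega
    have e4 : m + 7 + 1 - 4 = m + 4 := by omega
    have e5 : m + 7 - 4 = m + 3 := by omega
    rw [e5] at ih
    have f7 : ((m + 7).factorial : ℚ) = (m + 7) * (m + 6).factorial := by
      rw [show m + 7 = (m + 6) + 1 from rfl, Nat.factorial_succ]; push_cast; ring
    have f6 : ((m + 6).factorial : ℚ) = (m + 6) * (m + 5).factorial := by
      rw [show m + 6 = (m + 5) + 1 from rfl, Nat.factorial_succ]; push_cast; ring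
    have f5 : ((m + 5).factorial : ℚ) = (m + 5) * (m + 4).factorial := by
      rw [show m + 5 = (m + 4) + 1 from rfl, Nat.factorial_succ]; push_cast; ring
    have f4 : ((m + 4).factorial : ℚ) = (m + 4) * (m + 3).factorial := by
      rw [show m + 4 = (m + 3) + 1 from rfl, Nat.factorial_succ]; push_cast; ring
    have hne : ((m + 3).factorial : ℚ) ≠ 0 := by positivity
    rcases Nat.even_or_odd (m + 8) with he | ho
    · -- new term is even (i = m+8)
      have hodd : ¬ Odd (m + 7 + 1) := by
        simpa using (Nat.not_odd_iff_even.mpr (by simpa using he))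
      have heven : Even (m + 7 + 1) := by simpa using he
      rw [h7, h8, h3, Finset.filter_insert, Finset.filter_insert, if_neg hodd, if_pos heven,
        Finset.sum_insert (by simp), Finset.sum_insert (by simp), Finset.sum_insert (by simp),
        e1, e2, e3, e4]
      have key : ((1 : ℚ) / ((m + 7).factorial : ℚ)) ^ 2 * (((m + 6).factorial : ℚ) / 24) *
            (3 * ((m + 7 + 1 : ℕ) : ℚ) ^ 5 - 28 * ((m + 7 + 1 : ℕ) : ℚ) ^ 4 +
              103 * ((m + 7 + 1 : ℕ) : ℚ) ^ 3 - 188 * ((m + 7 + 1 : ℕ) : ℚ) ^ 2 +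
              164 * ((m + 7 + 1 : ℕ) : ℚ) - 48) =
          (1 / (8 * ((m + 5).factorial : ℚ)) - 1 / (4 * ((m + 6).factorial : ℚ)) +
            1 / (4 * ((m + 7).factorial : ℚ) * (((m + 7 + 1 : ℕ) : ℚ) - 1))) +
          (5 / (24 * ((m + 4).factorial : ℚ)) - 5 / (24 * ((m + 3).factorial : ℚ)) +
            1 / (3 * ((m + 3).factorial : ℚ))) := by
        push_cast
        rw [f7, f6, f5, f4, show (m : ℚ) + 7 + 1 - 1 = m + 7 by ring]
        have h1 : (m : ℚ) + 7 ≠ 0 := by positivity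
        have h2 : (m : ℚ) + 6 ≠ 0 := by positivity
        have h3' : (m : ℚ) + 5 ≠ 0 := by positivity
        have h4' : (m : ℚ) + 4 ≠ 0 := by positivity
        field_simp
        ring
      linear_combination ih + key
    · -- new term is odd (i = m+8)
      have hodd : Odd (m + 7 + 1) := by simpa using ho
      have heven : ¬ Even (m + 7 + 1) := by
        simpa using (Nat.not_even_iff_odd.mpr (by simpa using ho))
      rw [h7, h8, h3, Finset.filter_insert, Finset.filter_insert, if_pos hodd, if_neg heven,
        Finset.sum_insert (by simp), Finset.sum_insert (by simp), e1, e4]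
      have key : ((1 : ℚ) / ((m + 7).factorial : ℚ)) ^ 2 * (((m + 7).factorial : ℚ) / 24) *
            (3 * ((m + 7 + 1 : ℕ) : ℚ) ^ 4 - 25 * ((m + 7 + 1 : ℕ) : ℚ) ^ 3 +
              75 * ((m + 7 + 1 : ℕ) : ℚ) ^ 2 - 95 * ((m + 7 + 1 : ℕ) : ℚ) + 42) =
          5 / (24 * ((m + 4).factorial : ℚ)) - 5 / (24 * ((m + 3).factorial : ℚ)) +
            1 / (3 * ((m + 3).factorial : ℚ)) := by
        push_cast
        rw [f7, f6, f5, f4]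
        have h1 : (m : ℚ) + 7 ≠ 0 := by positivity
        have h2 : (m : ℚ) + 6 ≠ 0 := by positivity
        have h3' : (m : ℚ) + 5 ≠ 0 := by positivity
        have h4' : (m : ℚ) + 4 ≠ 0 := by positivity
        field_simp
        ring
      linear_combination ih + key

/-- The closed-form simplification establishing Theorem 2 of the paper from Lemma 8. -/
theorem closed_form_identity (n : ℕ) (hn : 7 ≤ n) :
    (((n - 1).factorial : ℚ) / (Nat.factorial 5 : ℚ)) ^ 2 * (5196 / 6) * 6 +
      (∑ i ∈ (Finset.Icc 7 n).filter (fun i => Odd i),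
        (((n - 1).factorial : ℚ) / ((i - 1).factorial : ℚ)) ^ 2 *
          (((i - 1).factorial : ℚ) / 24) *
          (3 * (i : ℚ) ^ 4 - 25 * (i : ℚ) ^ 3 + 75 * (i : ℚ) ^ 2 - 95 * (i : ℚ) + 42)) +
      (∑ i ∈ (Finset.Icc 8 n).filter (fun i => Even i),
        (((n - 1).factorial : ℚ) / ((i - 1).factorial : ℚ)) ^ 2 *
          (((i - 2).factorial : ℚ) / 24) *
          (3 * (i : ℚ) ^ 5 - 28 * (i : ℚ) ^ 4 + 103 * (i : ℚ) ^ 3 - 188 * (i : ℚ) ^ 2 +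
            164 * (i : ℚ) - 48)) =
    ((n - 1).factorial : ℚ) ^ 2 *
      (127 / 300 + 5 / (24 * ((n - 4).factorial : ℚ)) +
        (∑ i ∈ Finset.Icc 3 (n - 5), 1 / (3 * (i.factorial : ℚ))) +
        (∑ i ∈ (Finset.Icc 8 n).filter (fun i => Even i),
          (1 / (8 * ((i - 3).factorial : ℚ)) - 1 / (4 * ((i - 2).factorial : ℚ)) +
            1 / (4 * ((i - 1).factorial : ℚ) * ((i : ℚ) - 1))))) := by
  have h1 : (((n - 1).factorial : ℚ) / (Nat.factorial 5 : ℚ)) ^ 2 * (5196 / 6) * 6 =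
      ((n - 1).factorial : ℚ) ^ 2 * ((5196 : ℚ) / 14400) := by
    norm_num [Nat.factorial]; ring
  have hodd : (∑ i ∈ (Finset.Icc 7 n).filter (fun i => Odd i),
        (((n - 1).factorial : ℚ) / ((i - 1).factorial : ℚ)) ^ 2 *
          (((i - 1).factorial : ℚ) / 24) *
          (3 * (i : ℚ) ^ 4 - 25 * (i : ℚ) ^ 3 + 75 * (i : ℚ) ^ 2 - 95 * (i : ℚ) + 42)) =
      ((n - 1).factorial : ℚ) ^ 2 * ∑ i ∈ (Finset.Icc 7 n).filter (fun i => Odd i),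
        ((1 : ℚ) / ((i - 1).factorial : ℚ)) ^ 2 * (((i - 1).factorial : ℚ) / 24) *
          (3 * (i : ℚ) ^ 4 - 25 * (i : ℚ) ^ 3 + 75 * (i : ℚ) ^ 2 - 95 * (i : ℚ) + 42) := by
    rw [Finset.mul_sum]; exact Finset.sum_congr rfl fun i _ => by ring
  have heven : (∑ i ∈ (Finset.Icc 8 n).filter (fun i => Even i),
        (((n - 1).factorial : ℚ) / ((i - 1).factorial : ℚ)) ^ 2 *
          (((i - 2).factorial : ℚ) / 24) *
          (3 * (i : ℚ) ^ 5 - 28 * (i : ℚ) ^ 4 + 103 * (i : ℚ) ^ 3 - 188 * (i : ℚ) ^ 2 +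
            164 * (i : ℚ) - 48)) =
      ((n - 1).factorial : ℚ) ^ 2 * ∑ i ∈ (Finset.Icc 8 n).filter (fun i => Even i),
        ((1 : ℚ) / ((i - 1).factorial : ℚ)) ^ 2 * (((i - 2).factorial : ℚ) / 24) *
          (3 * (i : ℚ) ^ 5 - 28 * (i : ℚ) ^ 4 + 103 * (i : ℚ) ^ 3 - 188 * (i : ℚ) ^ 2 +
            164 * (i : ℚ) - 48) := by
    rw [Finset.mul_sum]; exact Finset.sum_congr rfl fun i _ => by ring
  rw [h1, hodd, heven, ← mul_add, ← mul_add, closed_aux n hn]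
end
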